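/- Along a left Bregman perpendicular a_λ defined by ∇f(a_λ) = ∇f(b⁺) + λ(∇f(a⁺) - ∇f(b⁺)) with ⟨∇f(a⁺) - ∇f(b⁺), a_λ - b⁺⟩ > 0 for λ > 0, the function λ ↦ D(b⁺, a_λ) is strictly increasing; specifically its derivative equals ⟨∇f(a⁺) - ∇f(b⁺), a_λ - b⁺⟩. -/

import Mathlib

open scoped RealInnerProductSpace

/-- Along a left Bregman perpendicular `a_λ` determined by
`∇f(a_λ) = ∇f(b⁺) + λ(∇f(a⁺) - ∇f(b⁺))`, the map `λ ↦ D(b⁺, a_λ)` has derivative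
`⟨∇f(a⁺) - ∇f(b⁺), a_λ - b⁺⟩` and, this being positive for `λ > 0`, is strictly
increasing on `[0, ∞)`. -/
theorem left_perpendicular_distance_strict_mono {d : ℕ}
    (f : EuclideanSpace ℝ (Fin d) → ℝ)
    (f' : EuclideanSpace ℝ (Fin d) → EuclideanSpace ℝ (Fin d))
    (G : Set (EuclideanSpace ℝ (Fin d))) (hG : IsOpen G)
    (hsmooth : ContDiffOn ℝ 2 f G)
    (hgrad : ∀ w ∈ G, HasGradientAt f (f' w) w)
    (aplus bplus : EuclideanSpace ℝ (Fin d)) (haplus : aplus ∈ G) (hbplus : bplus ∈ G)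
    (aline : ℝ → EuclideanSpace ℝ (Fin d))
    (aline' : ℝ → EuclideanSpace ℝ (Fin d))
    (halineG : ∀ l : ℝ, aline l ∈ G)
    (halinederiv : ∀ l : ℝ, HasDerivAt aline (aline' l) l)
    (heq : ∀ l : ℝ, f' (aline l) = f' bplus + l • (f' aplus - f' bplus))
    (hpos : ∀ l : ℝ, 0 < l → 0 < ⟪f' aplus - f' bplus, aline l - bplus⟫)
    (D : EuclideanSpace ℝ (Fin d) → EuclideanSpace ℝ (Fin d) → ℝ)
    (hD : ∀ x y, D x y = f x - f y - ⟪f' y, x - y⟫) :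
    (∀ l : ℝ, HasDerivAt (fun s => D bplus (aline s))
        ⟪f' aplus - f' bplus, aline l - bplus⟫ l) ∧
    StrictMonoOn (fun l => D bplus (aline l)) (Set.Ici (0 : ℝ)) := by
  set g := f' aplus - f' bplus with hg
  have key : ∀ l : ℝ, HasDerivAt (fun s => D bplus (aline s))
      ⟪g, aline l - bplus⟫ l := by
    intro l
    have h1 : HasDerivAt (fun s => f (aline s)) ⟪f' (aline l), aline' l⟫ l := by
      have := ((hgrad _ (halineG l)).hasFDerivAt.comp_hasDerivAt l (halinederiv l))
      simp at this
      exact this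
    have hu : HasDerivAt (fun s : ℝ => f' bplus + s • g) g l := by
      simpa using ((hasDerivAt_id l).smul_const g).const_add (f' bplus)
    have hw : HasDerivAt (fun s => bplus - aline s) (-aline' l) l := by
      simpa using (halinederiv l).const_sub bplus
    have h2 : HasDerivAt (fun s => ⟪f' (aline s), bplus - aline s⟫)
        (⟪f' (aline l), -aline' l⟫ + ⟪g, bplus - aline l⟫) l := by
      have := hu.inner ℝ hw
      simpa only [← heq] using this
    have h3 : HasDerivAt (fun s => D bplus (aline s))
        (0 - ⟪f' (aline l), aline' l⟫ -
          (⟪f' (aline l), -aline' l⟫ + ⟪g, bplus - aline l⟫)) l := by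
      simp only [hD]
      exact ((hasDerivAt_const l (f bplus)).sub h1).sub h2
    convert h3 using 1
    simp [inner_sub_right, inner_neg_right]
  refine ⟨key, ?_⟩
  apply strictMonoOn_of_deriv_pos (convex_Ici 0)
  · exact fun x _ => (key x).continuousAt.continuousWithinAt
  · intro x hx
    rw [(key x).deriv]
    exact hpos x (by simpa using hx)
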